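/- If 𝔱 = 𝔠, then there is an idempotent p ∈ ℕ* (necessarily a minimal idempotent) that is ≤-incomparable with every other idempotent: for every idempotent q ≠ p, neither p ≤ q nor q ≤ p, where r ≤ s means r + s = s + r = r. -/

import Mathlib

open Filter Set Topology

noncomputable section

/-- `βℕ`: the space of ultrafilters on `ℕ` (the Stone–Čech compactification of `ℕ`). -/
abbrev βN := Ultrafilter ℕ

/-- `ℕ* = βℕ ∖ ℕ`: the free (nonprincipal) ultrafilters, i.e. those containing
every cofinite set. -/
def NStar : Set βN := {p | (p : Filter ℕ) ≤ Filter.cofinite}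

/-- The shift map `σ : βℕ → βℕ`, the pushforward under `n ↦ n + 1`. -/
def shift (p : βN) : βN := p.map (· + 1)

/-- Addition on `βℕ`: `A ∈ p + q ↔ {n | A − n ∈ p} ∈ q`, where `A − n = {m | m + n ∈ A}`. -/
def addU (p q : βN) : βN := q.bind fun n => p.map (· + n)

/-- A right ideal of `(βℕ, +)`: `I + βℕ ⊆ I`. -/
def IsRightIdeal (I : Set βN) : Prop := ∀ p ∈ I, ∀ q : βN, addU p q ∈ I

/-- A minimal right ideal: a nonempty right ideal not properly containing any
other (nonempty) right ideal. -/
def IsMinRightIdeal (I : Set βN) : Prop :=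
  I.Nonempty ∧ IsRightIdeal I ∧
    ∀ J : Set βN, J.Nonempty → IsRightIdeal J → J ⊆ I → J = I

/-- `A* = {p ∈ ℕ* | A ∈ p}`, as a subset of the subspace `ℕ*`. -/
def starSet (A : Set ℕ) : Set ↥NStar := {p | A ∈ (p : βN)}

/-- `F* = ⋂_{A ∈ F} A*` for a (free) filter `F` on `ℕ`. -/
def filterStar (F : Filter ℕ) : Set βN := ⋂ A ∈ F, {p : βN | A ∈ p}

/-- A closed `P`-set of the space `ℕ*`: for every countable collection of open
sets containing `X`, `X` is contained in the interior of the intersection. -/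
def IsPSetSub (X : Set ↥NStar) : Prop :=
  IsClosed X ∧ ∀ 𝒜 : Set (Set ↥NStar), 𝒜.Countable →
    (∀ U ∈ 𝒜, IsOpen U ∧ X ⊆ U) → X ⊆ interior (⋂₀ 𝒜)

/-- A subset of `βℕ` which lies in `ℕ*` and is a closed `P`-set of `ℕ*`. -/
def IsPSetIn (X : Set βN) : Prop :=
  X ⊆ NStar ∧ IsPSetSub (Subtype.val ⁻¹' X)

/-- `A ⊆ ℕ` is thick if it contains arbitrarily long intervals. -/
def Thick (A : Set ℕ) : Prop := ∀ k : ℕ, ∃ n : ℕ, Set.Icc n (n + k) ⊆ A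

/-- `A ⊆* B`: `A ∖ B` is finite. -/
def almostSub (A B : Set ℕ) : Prop := (A \ B).Finite

/-- The tower number `𝔱`: the least cardinality of a `⊆*`-chain of infinite subsets
of `ℕ` with no infinite pseudo-intersection. -/
def towerNum : Cardinal :=
  sInf {c : Cardinal | ∃ C : Set (Set ℕ), c = Cardinal.mk ↥C ∧ (∀ A ∈ C, A.Infinite) ∧
    IsChain almostSub C ∧ ¬∃ B : Set ℕ, B.Infinite ∧ ∀ A ∈ C, almostSub B A}

/-- `𝔱_Θ`: the least cardinality of a `⊆*`-chain of thick subsets of `ℕ` with no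
thick `⊆*`-lower bound. -/
def towerNumTheta : Cardinal :=
  sInf {c : Cardinal | ∃ C : Set (Set ℕ), c = Cardinal.mk ↥C ∧ (∀ A ∈ C, Thick A) ∧
    IsChain almostSub C ∧ ¬∃ B : Set ℕ, Thick B ∧ ∀ A ∈ C, almostSub B A}

/-- The pseudo-intersection number `𝔭`: the least cardinality of a filter base of
infinite subsets of `ℕ` (all finite intersections infinite) with no infinite
pseudo-intersection. -/
def pNum : Cardinal :=
  sInf {c : Cardinal | ∃ C : Set (Set ℕ), c = Cardinal.mk ↥C ∧
    (∀ S : Finset (Set ℕ), ↑S ⊆ C → (⋂ A ∈ S, A : Set ℕ).Infinite) ∧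
    ¬∃ B : Set ℕ, B.Infinite ∧ ∀ A ∈ C, almostSub B A}

/-- Chain transitivity for a dynamical system on a topological space, via open
covers: for every open cover `𝒰` and all `x, y` there is a `𝒰`-chain from `x` to `y`. -/
def ChainTransitive {X : Type*} [TopologicalSpace X] (f : X → X) : Prop :=
  ∀ 𝒰 : Set (Set X), (∀ U ∈ 𝒰, IsOpen U) → ⋃₀ 𝒰 = Set.univ →
    ∀ x y : X, ∃ (n : ℕ) (c : ℕ → X), c 0 = x ∧ c n = y ∧
      ∀ i < n, ∃ U ∈ 𝒰, f (c i) ∈ U ∧ c (i + 1) ∈ U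

lemma shift_mem_NStar {p : βN} (hp : p ∈ NStar) : shift p ∈ NStar := by
  have h1 : Filter.Tendsto (· + 1) Filter.cofinite Filter.cofinite :=
    Function.Injective.tendsto_cofinite (add_left_injective 1)
  simp only [NStar, Set.mem_setOf_eq, shift, Ultrafilter.coe_map] at *
  exact (Filter.map_mono hp).trans h1

/-- The shift map restricted to `ℕ*`. -/
def shiftStar (p : ↥NStar) : ↥NStar := ⟨shift p.1, shift_mem_NStar p.2⟩

/-! ### Auxiliary development for Statement 11 -/

namespace Stmt11Aux

attribute [local instance] Ultrafilter.add Ultrafilter.addSemigroup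

/-- `A - n = {m | m + n ∈ A}`. -/
def res (A : Set ℕ) (n : ℕ) : Set ℕ := {m | m + n ∈ A}

lemma mem_res {A : Set ℕ} {n m : ℕ} : m ∈ res A n ↔ m + n ∈ A := Iff.rfl

lemma res_zero (A : Set ℕ) : res A 0 = A := by ext m; simp [res]

lemma res_res (A : Set ℕ) (n k : ℕ) : res (res A n) k = res A (k + n) := by
  ext m; simp [res, add_assoc]

lemma res_eq_preimage (A : Set ℕ) (n : ℕ) : res A n = (· + n) ⁻¹' A := rfl

lemma res_finite {A : Set ℕ} (hA : A.Finite) (n : ℕ) : (res A n).Finite := by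
  rw [res_eq_preimage]
  exact hA.preimage (Set.injOn_of_injective (add_left_injective n))

lemma res_mono {A B : Set ℕ} (h : A ⊆ B) (n : ℕ) : res A n ⊆ res B n :=
  fun _ hm => h hm

lemma res_diff (A B : Set ℕ) (n : ℕ) : res A n \ res B n = res (A \ B) n := rfl

lemma res_inter (A B : Set ℕ) (n : ℕ) : res (A ∩ B) n = res A n ∩ res B n := rfl

lemma res_compl (A : Set ℕ) (n : ℕ) : res Aᶜ n = (res A n)ᶜ := rfl

/-! ### almostSub lemmas -/

lemma almostSub_refl (A : Set ℕ) : almostSub A A := by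
  simp [almostSub]

lemma almostSub_of_subset {A B : Set ℕ} (h : A ⊆ B) : almostSub A B := by
  have : A \ B = ∅ := Set.diff_eq_empty.2 h
  simp [almostSub, this]

lemma almostSub_trans {A B C : Set ℕ} (h1 : almostSub A B) (h2 : almostSub B C) :
    almostSub A C := by
  have : A \ C ⊆ (A \ B) ∪ (B \ C) := by
    intro x hx
    by_cases hb : x ∈ B
    · exact Or.inr ⟨hb, hx.2⟩
    · exact Or.inl ⟨hx.1, hb⟩
  exact Set.Finite.subset (h1.union h2) this

lemma almostSub_trans_subset {A B C : Set ℕ} (h1 : A ⊆ B) (h2 : almostSub B C) :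
    almostSub A C := almostSub_trans (almostSub_of_subset h1) h2

lemma almostSub_res {A B : Set ℕ} (h : almostSub A B) (n : ℕ) :
    almostSub (res A n) (res B n) := by
  unfold almostSub at *
  rw [res_diff]
  exact res_finite h n

lemma mem_of_almostSub_of_infinite {A B : Set ℕ} (h : almostSub A B) (hA : A.Infinite) :
    (A ∩ B).Infinite := by
  have : A ∩ B = A \ (A \ B) := by ext x; by_cases hx : x ∈ B <;> simp [hx]
  rw [this]
  exact hA.diff h

/-! ### Membership lemmas for `addU` -/

lemma mem_addU {A : Set ℕ} {p q : βN} : A ∈ addU p q ↔ {n | res A n ∈ p} ∈ q := by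
  show A ∈ (Ultrafilter.bind q fun n => p.map (· + n)) ↔ _
  have : A ∈ (Ultrafilter.bind q fun n => p.map (· + n)) ↔
      A ∈ (Filter.bind (q : Filter ℕ) fun n => ((p.map (· + n) : Ultrafilter ℕ) : Filter ℕ)) :=
    Iff.rfl
  rw [this, Filter.mem_bind']
  rfl

lemma addU_eq_add (p q : βN) : addU p q = q + p := by
  apply Ultrafilter.coe_injective
  apply Filter.ext
  intro A
  rw [show (A ∈ (addU p q : Filter ℕ)) ↔ A ∈ addU p q from Iff.rfl, mem_addU]
  have h2 : A ∈ ((q + p : βN) : Filter ℕ) ↔ ∀ᶠ n in (q : Filter ℕ), ∀ᶠ m in (p : Filter ℕ), n + m ∈ A :=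
    Ultrafilter.eventually_add q p (· ∈ A)
  rw [h2]
  show _ ↔ {n | {m | n + m ∈ A} ∈ p} ∈ q
  have : ∀ n : ℕ, res A n = {m | n + m ∈ A} := by
    intro n; ext m; simp [res, add_comm]
  constructor
  · intro hh; convert hh using 2; ext n; rw [← this n]
  · intro hh; convert hh using 2; ext n; rw [← this n]

lemma addU_assoc (a b c : βN) : addU (addU a b) c = addU a (addU b c) := by
  rw [addU_eq_add, addU_eq_add, addU_eq_add, addU_eq_add, add_assoc]

lemma addU_pure_right (p : βN) (n : ℕ) : addU p (pure n) = p.map (· + n) := by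
  apply Ultrafilter.coe_injective
  apply Filter.ext
  intro A
  rw [show (A ∈ (addU p (pure n) : Filter ℕ)) ↔ A ∈ addU p (pure n) from Iff.rfl, mem_addU]
  simp [Ultrafilter.mem_pure, Ultrafilter.mem_map, res_eq_preimage]

lemma mem_addU_pure {A : Set ℕ} {p : βN} {n : ℕ} : A ∈ addU p (pure n) ↔ res A n ∈ p := by
  rw [addU_pure_right, Ultrafilter.mem_map, res_eq_preimage]

lemma pure_add_pure (n k : ℕ) : addU (pure n) (pure k) = (pure (n + k) : βN) := by
  rw [addU_pure_right]
  apply Ultrafilter.coe_injective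
  apply Filter.ext
  intro A
  simp [Ultrafilter.mem_map, Ultrafilter.mem_pure]

/-! ### NStar lemmas -/

lemma mem_NStar_iff {p : βN} : p ∈ NStar ↔ ∀ A : Set ℕ, Aᶜ.Finite → A ∈ p := by
  constructor
  · intro hp A hA
    exact hp (Filter.mem_cofinite.2 hA)
  · intro hp s hs
    exact hp s (Filter.mem_cofinite.1 hs)

lemma NStar.mem_of_almost {p : βN} (hp : p ∈ NStar) {A B : Set ℕ} (hB : B ∈ p)
    (h : almostSub B A) : A ∈ p := by
  have h1 : (B \ A)ᶜ ∈ p := mem_NStar_iff.1 hp _ (by rw [compl_compl]; exact h)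
  exact Filter.mem_of_superset (Filter.inter_mem hB h1) (by
    intro x hx
    by_contra hxA
    exact hx.2 ⟨hx.1, hxA⟩)

lemma infinite_of_mem_NStar {p : βN} (hp : p ∈ NStar) {A : Set ℕ} (hA : A ∈ p) : A.Infinite := by
  by_contra hfin
  rw [Set.not_infinite] at hfin
  have : Aᶜ ∈ p := mem_NStar_iff.1 hp _ (by simpa using hfin)
  have h2 := Filter.inter_mem hA this
  rw [Set.inter_compl_self] at h2
  exact (Filter.nonempty_of_mem h2).ne_empty rfl

lemma addU_mem_NStar {p : βN} (hp : p ∈ NStar) (x : βN) : addU p x ∈ NStar := by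
  rw [mem_NStar_iff]
  intro A hA
  rw [mem_addU]
  have : ∀ n, res A n ∈ p := by
    intro n
    apply mem_NStar_iff.1 hp
    rw [← res_compl]
    exact res_finite hA n
  have : {n | res A n ∈ p} = Set.univ := Set.eq_univ_of_forall this
  rw [this]
  exact Filter.univ_mem

/-! ### Thickness lemmas -/

lemma thick_univ : Thick (Set.univ : Set ℕ) := fun k => ⟨0, by simp⟩

lemma Thick.infinite {A : Set ℕ} (hA : Thick A) : A.Infinite := by
  apply Set.infinite_of_not_bddAbove
  rintro ⟨N, hN⟩
  obtain ⟨n, hn⟩ := hA (N + 1)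
  have : n + (N + 1) ∈ A := hn ⟨Nat.le_add_right _ _, le_refl _⟩
  have := hN this
  omega

/-- `col k T = {n | [n, n+k] ⊆ T}`. -/
def col (k : ℕ) (T : Set ℕ) : Set ℕ := {n | Set.Icc n (n + k) ⊆ T}

lemma col_infinite {T : Set ℕ} (hT : Thick T) (k : ℕ) : (col k T).Infinite := by
  apply Set.infinite_of_not_bddAbove
  rintro ⟨N, hN⟩
  obtain ⟨m, hm⟩ := hT (N + k + 1)
  have hmem : m + N + 1 ∈ col k T := by
    intro x hx
    rcases hx with ⟨h1, h2⟩
    exact hm ⟨by omega, by omega⟩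
  have := hN hmem
  omega

lemma col_almostSub {T S : Set ℕ} (h : almostSub T S) (k : ℕ) :
    almostSub (col k T) (col k S) := by
  have hsub : col k T \ col k S ⊆ ⋃ m ∈ T \ S, Set.Iic m := by
    rintro n ⟨hnT, hnS⟩
    rw [col, Set.mem_setOf_eq] at hnS
    obtain ⟨x, hx1, hx2⟩ := not_subset.1 hnS
    refine Set.mem_biUnion (?_ : x ∈ T \ S) ?_
    · exact ⟨hnT hx1, hx2⟩
    · exact hx1.1
  exact Set.Finite.subset (Set.Finite.biUnion h (fun m _ => Set.finite_Iic m)) hsub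

lemma thick_inter_res {T : Set ℕ} (hT : Thick T) : Thick (T ∩ res T 1) := by
  intro k
  obtain ⟨n, hn⟩ := hT (k + 1)
  refine ⟨n, fun x hx => ?_⟩
  rcases hx with ⟨h1, h2⟩
  constructor
  · exact hn ⟨h1, by omega⟩
  · exact hn ⟨by omega, by omega⟩

/-- `UU A k = ⋃_{n ≤ k} (A - n)`. -/
def UU (A : Set ℕ) (k : ℕ) : Set ℕ := ⋃ n ∈ Set.Iic k, res A n

lemma mem_UU {A : Set ℕ} {k m : ℕ} : m ∈ UU A k ↔ ∃ n ≤ k, m + n ∈ A := by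
  simp [UU, res]

lemma thick_dichotomy {B A : Set ℕ} (hB : Thick B) :
    Thick (B \ A) ∨ ∃ k, Thick (B ∩ UU A k) := by
  by_cases h : Thick (B \ A)
  · exact Or.inl h
  · right
    simp only [Thick, not_forall, not_exists] at h
    obtain ⟨k, hk⟩ := h
    refine ⟨k, fun K => ?_⟩
    obtain ⟨n, hn⟩ := hB (K + k)
    refine ⟨n, fun m hm => ?_⟩
    rcases hm with ⟨hm1, hm2⟩
    constructor
    · exact hn ⟨hm1, by omega⟩
    · obtain ⟨t, ht1, ht2⟩ := not_subset.1 (hk m)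
      rcases ht1 with ⟨htl, htr⟩
      have htB : t ∈ B := hn ⟨by omega, by omega⟩
      have htA : t ∈ A := by
        by_contra hc
        exact ht2 ⟨htB, hc⟩
      rw [mem_UU]
      exact ⟨t - m, by omega, by rwa [show m + (t - m) = t by omega]⟩

/-! ### The tower-number pseudo-intersection lemmas -/

lemma tower_pi {𝒞 : Set (Set ℕ)} (hc : Cardinal.mk ↥𝒞 < towerNum)
    (hinf : ∀ A ∈ 𝒞, A.Infinite) (hch : IsChain almostSub 𝒞) :
    ∃ B : Set ℕ, B.Infinite ∧ ∀ A ∈ 𝒞, almostSub B A := by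
  by_contra hcon
  have : Cardinal.mk ↥𝒞 ∈ {c : Cardinal | ∃ C : Set (Set ℕ), c = Cardinal.mk ↥C ∧
      (∀ A ∈ C, A.Infinite) ∧ IsChain almostSub C ∧
      ¬∃ B : Set ℕ, B.Infinite ∧ ∀ A ∈ C, almostSub B A} :=
    ⟨𝒞, rfl, hinf, hch, hcon⟩
  exact absurd (csInf_le' this) (not_le.2 hc)
/-! ### Generic transfinite recursion producing sets of naturals -/

lemma wo_rec {σ : Type*} [LinearOrder σ] [WellFoundedLT σ]
    (P : σ → (σ → Set ℕ) → Set ℕ → Prop)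
    (hP : ∀ i (f g : σ → Set ℕ), (∀ j, j < i → f j = g j) → ∀ Y, P i f Y → P i g Y)
    (hex : ∀ i (f : σ → Set ℕ), (∀ j, j < i → P j f (f j)) → ∃ Y, P i f Y) :
    ∃ X : σ → Set ℕ, ∀ i, P i X (X i) := by
  classical
  let step : ∀ i : σ, (∀ j, j < i → Set ℕ) → Set ℕ := fun i prev =>
    if h : ∃ Y, P i (fun j => if hj : j < i then prev j hj else ∅) Y then h.choose else ∅
  let X : σ → Set ℕ := IsWellFounded.fix (· < ·) step
  have hXeq : ∀ i, X i = step i (fun j _ => X j) := fun i => IsWellFounded.fix_eq (· < ·) step i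
  refine ⟨X, fun i => ?_⟩
  refine IsWellFounded.induction (motive := fun i => P i X (X i)) (· < ·) i (fun i IH => ?_)
  have hPf : ∀ j, j < i → P j (fun j' => if _ : j' < i then X j' else ∅)
      ((fun j' => if _ : j' < i then X j' else ∅) j) := by
    intro j hj
    have he : (fun j' => if _ : j' < i then X j' else (∅ : Set ℕ)) j = X j := dif_pos hj
    rw [he]
    refine hP j X _ (fun j' hj' => ?_) _ (IH j hj)
    exact (dif_pos (lt_trans hj' hj) :
      (if _ : j' < i then X j' else (∅ : Set ℕ)) = X j').symm
  have hEx : ∃ Y, P i (fun j' => if _ : j' < i then X j' else ∅) Y := hex i _ hPf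
  have hXi : X i = hEx.choose := by
    rw [hXeq i]
    exact dif_pos hEx
  show P i X (X i)
  rw [hXi]
  exact hP i _ X (fun j hj => dif_pos hj) _ hEx.choose_spec

/-! ### Cofinality facts about the continuum -/

lemma aleph0_lt_cof_continuum : Cardinal.aleph0.{0} < (Cardinal.continuum.{0}.ord).cof := by
  by_contra hle
  rw [not_lt] at hle
  have h1 := Cardinal.lt_power_cof (Cardinal.aleph0_le_continuum)
  have h2 : Cardinal.continuum ^ (Cardinal.continuum.ord).cof ≤ Cardinal.continuum ^ Cardinal.aleph0 :=
    Cardinal.power_le_power_left Cardinal.continuum_ne_zero hle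
  rw [Cardinal.continuum_power_aleph0] at h2
  exact absurd (h1.trans_le h2) (lt_irrefl _)

lemma exists_bound_of_countable (s : Set ((Cardinal.continuum.{0}.ord).ToType))
    (hs : s.Countable) : ∃ b, ∀ x ∈ s, x < b := by
  by_contra hcon
  push_neg at hcon
  have hub : Set.Unbounded (· < ·) s := by
    intro a
    obtain ⟨x, hx, hax⟩ := hcon a
    exact ⟨x, hx, not_lt.2 hax⟩
  have hi : IsWellOrder (Cardinal.continuum.{0}.ord.ToType) (· < ·) := isWellOrder_lt
  have h1 : (Cardinal.continuum.{0}.ord).cof ≤ Cardinal.mk ↥s := by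
    rw [← Ordinal.cof_toType]
    exact Order.cof_le (fun a => let ⟨x, hx, hax⟩ := hub a; ⟨x, hx, not_lt.1 hax⟩)
  have h2 : Cardinal.mk ↥s ≤ Cardinal.aleph0 := by
    rw [Cardinal.mk_le_aleph0_iff, ← Set.countable_coe_iff] at *
    exact hs
  exact absurd (h1.trans h2) (not_le.2 aleph0_lt_cof_continuum)

/-! ### A dominating function over any family of size `< 𝔱` -/

lemma dominating {ι : Type} (f : ι → ℕ → ℕ) (hι : Cardinal.mk ι < towerNum) :
    ∃ g : ℕ → ℕ, ∀ i, {k | g k < f i k}.Finite := by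
  classical
  -- monotone majorant of each f i
  set F : ι → ℕ → ℕ := fun i k => (Finset.range (k + 1)).sup (f i) with hF
  have hfF : ∀ i k, f i k ≤ F i k := fun i k =>
    Finset.le_sup (Finset.mem_range.2 (Nat.lt_succ_self k))
  have hFmono : ∀ i, Monotone (F i) := by
    intro i k k' hk
    exact Finset.sup_mono (Finset.range_subset_range.2 (by omega))
  set σ := (Cardinal.mk ι).ord.ToType with hσ
  have hmkσ : Cardinal.mk σ = Cardinal.mk ι := by
    rw [hσ, Cardinal.mk_toType, Cardinal.card_ord]
  obtain ⟨e⟩ : Nonempty (σ ≃ ι) := Cardinal.eq.1 hmkσ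
  set P : σ → (σ → Set ℕ) → Set ℕ → Prop := fun i Xf Y =>
    Y.Infinite ∧ (∀ j, j < i → almostSub Y (Xf j)) ∧
      (∀ a ∈ Y, ∀ b ∈ Y, a < b → F (e i) a < b) with hPdef
  have hP : ∀ i (u v : σ → Set ℕ), (∀ j, j < i → u j = v j) → ∀ Y, P i u Y → P i v Y := by
    intro i u v huv Y hY
    exact ⟨hY.1, fun j hj => (huv j hj) ▸ hY.2.1 j hj, hY.2.2⟩
  have hex : ∀ i (u : σ → Set ℕ), (∀ j, j < i → P j u (u j)) → ∃ Y, P i u Y := by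
    intro i u hprev
    -- pseudo-intersection of the previous chain
    have hchain : IsChain almostSub (u '' (Set.Iio i)) := by
      rintro A ⟨j, hj, rfl⟩ B ⟨j', hj', rfl⟩ hne
      rcases lt_trichotomy j j' with h | h | h
      · exact Or.inr ((hprev j' hj').2.1 j h)
      · exact absurd (congrArg u h) hne
      · exact Or.inl ((hprev j hj).2.1 j' h)
    have hcard : Cardinal.mk ↥(u '' (Set.Iio i)) < towerNum :=
      lt_of_le_of_lt (Cardinal.mk_image_le) (lt_trans (Cardinal.mk_Iio_ord_toType i) hι)
    have hinf : ∀ A ∈ u '' (Set.Iio i), A.Infinite := by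
      rintro A ⟨j, hj, rfl⟩; exact (hprev j hj).1
    obtain ⟨B0, hB0inf, hB0sub⟩ := tower_pi hcard hinf hchain
    -- thin out B0 to escape `F (e i)`
    have hgt : ∀ a : ℕ, ∃ b ∈ B0, a < b := fun a => hB0inf.exists_gt a
    choose nxt hnxt1 hnxt2 using hgt
    set y : ℕ → ℕ := fun n => Nat.rec (nxt 0) (fun _ yn => nxt (max yn (F (e i) yn))) n with hy
    have hyB0 : ∀ n, y n ∈ B0 := by
      intro n; cases n with
      | zero => exact hnxt1 0
      | succ m => exact hnxt1 _
    have hystep : ∀ n, max (y n) (F (e i) (y n)) < y (n + 1) := fun n => hnxt2 _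
    have hymono : StrictMono y := strictMono_nat_of_lt_succ
      (fun n => lt_of_le_of_lt (le_max_left _ _) (hystep n))
    refine ⟨Set.range y, ⟨Set.infinite_range_of_injective hymono.injective, ?_, ?_⟩⟩
    · intro j hj
      exact almostSub_trans_subset (Set.range_subset_iff.2 hyB0)
        (hB0sub _ ⟨j, hj, rfl⟩)
    · rintro a ⟨n, rfl⟩ b ⟨m, rfl⟩ hab
      have hnm : n < m := hymono.lt_iff_lt.1 hab
      calc F (e i) (y n) ≤ max (y n) (F (e i) (y n)) := le_max_right _ _
        _ < y (n + 1) := hystep n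
        _ ≤ y m := hymono.monotone hnm
  obtain ⟨X, hX⟩ := wo_rec P hP hex
  -- pseudo-intersection of the entire chain
  have hchain : IsChain almostSub (Set.range X) := by
    rintro A ⟨j, rfl⟩ B ⟨j', rfl⟩ hne
    rcases lt_trichotomy j j' with h | h | h
    · exact Or.inr ((hX j').2.1 j h)
    · exact absurd (congrArg X h) hne
    · exact Or.inl ((hX j).2.1 j' h)
  have hcard : Cardinal.mk ↥(Set.range X) < towerNum :=
    lt_of_le_of_lt (Cardinal.mk_range_le) (hmkσ ▸ hι)
  obtain ⟨Z, hZinf, hZsub⟩ := tower_pi hcard (by rintro A ⟨j, rfl⟩; exact (hX j).1) hchain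
  have hgt : ∀ a : ℕ, ∃ b ∈ Z, a < b := fun a => hZinf.exists_gt a
  choose nx hnx1 hnx2 using hgt
  refine ⟨fun k => nx (nx k), fun i => ?_⟩
  set i' := e.symm i with hi'
  have hei' : e i' = i := e.apply_symm_apply i
  have hfin : (Z \ X i').Finite := hZsub _ ⟨i', rfl⟩
  obtain ⟨N, hN⟩ := hfin.bddAbove
  apply Set.Finite.subset (Set.finite_Iic N)
  intro k hk
  rw [Set.mem_setOf_eq] at hk
  have hk' : nx (nx k) < f i k := hk
  clear hk
  by_contra hkN
  rw [Set.mem_Iic, not_le] at hkN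
  -- a := nx k and b := nx (nx k) are both in X i'
  have haZ : nx k ∈ Z := hnx1 k
  have hbZ : nx (nx k) ∈ Z := hnx1 _
  have haX : nx k ∈ X i' := by
    by_contra hc
    exact absurd (hN ⟨haZ, hc⟩) (not_le.2 (lt_trans hkN (hnx2 k)))
  have hbX : nx (nx k) ∈ X i' := by
    by_contra hc
    exact absurd (hN ⟨hbZ, hc⟩) (not_le.2 (lt_trans (lt_trans hkN (hnx2 k)) (hnx2 _)))
  have hesc := (hX i').2.2 _ haX _ hbX (hnx2 (nx k))
  rw [hei'] at hesc
  have : f i k ≤ F i (nx k) :=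
    le_trans (hfF i k) (hFmono i (le_of_lt (hnx2 k)))
  omega
/-! ### Pseudo-intersections of small chains of thick sets (`𝔱_Θ ≥ 𝔱`) -/

lemma thick_pi {𝒞 : Set (Set ℕ)} (hc : Cardinal.mk ↥𝒞 < towerNum)
    (hth : ∀ A ∈ 𝒞, Thick A) (hch : IsChain almostSub 𝒞) :
    ∃ B : Set ℕ, Thick B ∧ ∀ T ∈ 𝒞, almostSub B T := by
  classical
  have hcol : ∀ k : ℕ, ∃ Bk : Set ℕ, Bk.Infinite ∧ ∀ T ∈ 𝒞, almostSub Bk (col k T) := by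
    intro k
    have hchain : IsChain almostSub ((col k) '' 𝒞) := by
      rintro A ⟨T, hT, rfl⟩ B ⟨S, hS, rfl⟩ hne
      have hTS : T ≠ S := by rintro rfl; exact hne rfl
      rcases hch hT hS hTS with h | h
      · exact Or.inl (col_almostSub h k)
      · exact Or.inr (col_almostSub h k)
    have hcard : Cardinal.mk ↥((col k) '' 𝒞) < towerNum := lt_of_le_of_lt Cardinal.mk_image_le hc
    have hinf : ∀ A ∈ (col k) '' 𝒞, A.Infinite := by
      rintro A ⟨T, hT, rfl⟩; exact col_infinite (hth T hT) k
    obtain ⟨Bk, h1, h2⟩ := tower_pi hcard hinf hchain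
    exact ⟨Bk, h1, fun T hT => h2 _ ⟨T, hT, rfl⟩⟩
  choose Bk hBkinf hBksub using hcol
  set f : ↥𝒞 → ℕ → ℕ := fun T k => sSup (Bk k \ col k T.1) with hf
  obtain ⟨g, hg⟩ := dominating f hc
  have hgt : ∀ k, ∃ m ∈ Bk k, g k < m := fun k => (hBkinf k).exists_gt (g k)
  choose n hn1 hn2 using hgt
  refine ⟨⋃ k, Set.Icc (n k) (n k + k), ?_, ?_⟩
  · intro k
    exact ⟨n k, Set.subset_iUnion (fun k => Set.Icc (n k) (n k + k)) k⟩
  · intro T hT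
    have hfinbad := hg ⟨T, hT⟩
    have hsub : (⋃ k, Set.Icc (n k) (n k + k)) \ T ⊆
        ⋃ k ∈ {k | g k < f ⟨T, hT⟩ k}, Set.Icc (n k) (n k + k) := by
      rintro x ⟨hx1, hx2⟩
      obtain ⟨k, hk⟩ : ∃ k, x ∈ Set.Icc (n k) (n k + k) := Set.mem_iUnion.1 hx1
      refine Set.mem_biUnion ?_ hk
      by_contra hbad
      rw [Set.mem_setOf_eq, not_lt] at hbad
      have hnk : n k ∈ col k T := by
        by_contra hcc
        have hmem : n k ∈ Bk k \ col k T := ⟨hn1 k, hcc⟩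
        have hfin : (Bk k \ col k T).Finite := hBksub k T hT
        have hle : n k ≤ f ⟨T, hT⟩ k := le_csSup hfin.bddAbove hmem
        have := hn2 k
        omega
      exact hx2 (hnk hk)
    exact Set.Finite.subset (Set.Finite.biUnion hfinbad (fun k _ => Set.finite_Icc _ _)) hsub
/-! ### The transfinite construction of the tower of thick sets -/

lemma construction (h : towerNum = Cardinal.continuum.{0}) :
    ∃ (T : (Cardinal.continuum.{0}.ord).ToType → Set ℕ)
      (E : (Cardinal.continuum.{0}.ord).ToType → Set ℕ),
      Function.Surjective E ∧
      ∀ i, Thick (T i) ∧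
        (∀ j, j < i → almostSub (T i) (T j) ∧ almostSub (T i) (res (T j) 1)) ∧
        (T i ∩ E i = ∅ ∨ ∃ k, T i ⊆ UU (E i) k) := by
  classical
  obtain ⟨E, hE⟩ : ∃ E : (Cardinal.continuum.{0}.ord).ToType → Set ℕ, Function.Surjective E := by
    have h1 : Cardinal.mk ((Cardinal.continuum.{0}.ord).ToType) = Cardinal.mk (Set ℕ) := by
      rw [Cardinal.mk_toType, Cardinal.card_ord, Cardinal.mk_set, Cardinal.mk_nat,
        Cardinal.two_power_aleph0]
    obtain ⟨e⟩ := Cardinal.eq.1 h1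
    exact ⟨e, e.surjective⟩
  set P : (Cardinal.continuum.{0}.ord).ToType →
      ((Cardinal.continuum.{0}.ord).ToType → Set ℕ) → Set ℕ → Prop := fun i Xf Y =>
    Thick Y ∧ (∀ j, j < i → almostSub Y (Xf j) ∧ almostSub Y (res (Xf j) 1)) ∧
      (Y ∩ E i = ∅ ∨ ∃ k, Y ⊆ UU (E i) k) with hPdef
  have hP : ∀ i (u v : _ → Set ℕ), (∀ j, j < i → u j = v j) → ∀ Y, P i u Y → P i v Y := by
    intro i u v huv Y hY
    refine ⟨hY.1, fun j hj => ?_, hY.2.2⟩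
    rw [← huv j hj]
    exact hY.2.1 j hj
  have hex : ∀ i (u : _ → Set ℕ), (∀ j, j < i → P j u (u j)) → ∃ Y, P i u Y := by
    intro i u hprev
    have hchain : IsChain almostSub (u '' (Set.Iio i)) := by
      rintro A ⟨j, hj, rfl⟩ B ⟨j', hj', rfl⟩ hne
      rcases lt_trichotomy j j' with hlt | heq | hlt
      · exact Or.inr ((hprev j' hj').2.1 j hlt).1
      · exact absurd (congrArg u heq) hne
      · exact Or.inl ((hprev j hj).2.1 j' hlt).1
    have hcard : Cardinal.mk ↥(u '' (Set.Iio i)) < towerNum := by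
      rw [h]
      exact lt_of_le_of_lt Cardinal.mk_image_le (Cardinal.mk_Iio_ord_toType i)
    have hth : ∀ A ∈ u '' (Set.Iio i), Thick A := by
      rintro A ⟨j, hj, rfl⟩; exact (hprev j hj).1
    obtain ⟨B0, hB0th, hB0sub⟩ := thick_pi hcard hth hchain
    have hB0sub' : ∀ j, j < i → almostSub B0 (u j) := fun j hj => hB0sub _ ⟨j, hj, rfl⟩
    set B1 : Set ℕ := B0 ∩ res B0 1 with hB1
    have hB1th : Thick B1 := thick_inter_res hB0th
    have hB1cond : ∀ j, j < i → almostSub B1 (u j) ∧ almostSub B1 (res (u j) 1) := by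
      intro j hj
      constructor
      · exact almostSub_trans_subset (Set.inter_subset_left) (hB0sub' j hj)
      · exact almostSub_trans_subset (Set.inter_subset_right)
          (almostSub_res (hB0sub' j hj) 1)
    rcases thick_dichotomy (A := E i) hB1th with hcase | ⟨k, hcase⟩
    · refine ⟨B1 \ E i, hcase, fun j hj => ?_, Or.inl ?_⟩
      · exact ⟨almostSub_trans_subset (Set.diff_subset) (hB1cond j hj).1,
          almostSub_trans_subset (Set.diff_subset) (hB1cond j hj).2⟩
      · ext x; simp only [Set.mem_inter_iff, Set.mem_diff, Set.mem_empty_iff_false, iff_false]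
        rintro ⟨⟨_, hx2⟩, hx3⟩; exact hx2 hx3
    · refine ⟨B1 ∩ UU (E i) k, hcase, fun j hj => ?_, Or.inr ⟨k, Set.inter_subset_right⟩⟩
      exact ⟨almostSub_trans_subset (Set.inter_subset_left) (hB1cond j hj).1,
        almostSub_trans_subset (Set.inter_subset_left) (hB1cond j hj).2⟩
  obtain ⟨T, hT⟩ := wo_rec P hP hex
  exact ⟨T, E, hE, hT⟩
/-! ### The minimal right ideal determined by the tower -/

/-- Membership in the set `R = {p ∈ ℕ* | ∀ i, T i ∈ p}`. -/
def inR (T : (Cardinal.continuum.{0}.ord).ToType → Set ℕ) (p : βN) : Prop :=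
  p ∈ NStar ∧ ∀ i, T i ∈ p

section Main

variable {T : (Cardinal.continuum.{0}.ord).ToType → Set ℕ}

lemma exists_gt_idx (i : (Cardinal.continuum.{0}.ord).ToType) : ∃ j, i < j := by
  obtain ⟨b, hb⟩ := exists_bound_of_countable {i} (Set.countable_singleton i)
  exact ⟨b, hb i rfl⟩

lemma res_cofinal (hmono : ∀ i j, j < i → almostSub (T i) (T j))
    (hshift : ∀ i j, j < i → almostSub (T i) (res (T j) 1)) :
    ∀ (n : ℕ) (i), ∃ j, almostSub (T j) (res (T i) n) := by
  intro n
  induction n with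
  | zero => exact fun i => ⟨i, by rw [res_zero]; exact almostSub_refl _⟩
  | succ n IH =>
    intro i
    obtain ⟨j, hj⟩ := IH i
    obtain ⟨j', hj'⟩ := exists_gt_idx j
    have h1 : almostSub (T j') (res (T j) 1) := hshift j' j hj'
    have h2 : almostSub (res (T j) 1) (res (res (T i) n) 1) := almostSub_res hj 1
    rw [res_res] at h2
    rw [Nat.add_comm] at h2
    exact ⟨j', almostSub_trans h1 h2⟩

lemma exists_inR (hth : ∀ i, Thick (T i))
    (hmono : ∀ i j, j < i → almostSub (T i) (T j)) : ∃ p : βN, inR T p := by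
  classical
  haveI hnonempty : Nonempty ((Cardinal.continuum.{0}.ord).ToType) := by
    rw [Ordinal.nonempty_toType_iff]
    intro h0
    have hcard := congrArg Ordinal.card h0
    rw [Cardinal.card_ord, Ordinal.card_zero] at hcard
    exact Cardinal.continuum_ne_zero hcard
  set S : Set (Set ℕ) := Set.range T ∪ {A | Aᶜ.Finite} with hS
  have hfip : ∀ t ⊆ S, t.Finite → (⋂₀ t).Nonempty := by
    intro t hts htfin
    obtain ⟨base, hbaseinf, hbase⟩ :
        ∃ base : Set ℕ, base.Infinite ∧ ∀ A ∈ t ∩ Set.range T, almostSub base A := by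
      rcases Set.eq_empty_or_nonempty (t ∩ Set.range T) with hemp | hne
      · exact ⟨Set.univ, Set.infinite_univ, fun A hA => by
          rw [hemp] at hA; exact absurd hA (Set.notMem_empty A)⟩
      · have hfin1 : (t ∩ Set.range T).Finite := htfin.subset Set.inter_subset_left
        have hidx : ∀ A ∈ t ∩ Set.range T, ∃ i, T i = A := fun A hA => hA.2
        choose! idx hidx using hidx
        have hJfin : (idx '' (t ∩ Set.range T)).Finite := hfin1.image idx
        have hJne : (idx '' (t ∩ Set.range T)).Nonempty := hne.image idx
        obtain ⟨M, hM1, hM2⟩ : ∃ M ∈ idx '' (t ∩ Set.range T), ∀ a' ∈ idx '' (t ∩ Set.range T),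
            id M ≤ id a' → id M = id a' := by
          obtain ⟨M, hM⟩ := hJfin.exists_maximal hJne
          exact ⟨M, hM.1, fun a' ha' hle => le_antisymm hle (hM.2 ha' hle)⟩
        refine ⟨T M, Thick.infinite (hth M), ?_⟩
        rintro A hA
        have hiA : idx A ∈ idx '' (t ∩ Set.range T) := Set.mem_image_of_mem idx hA
        have hle : idx A ≤ M := by
          by_contra hlt
          rw [not_le] at hlt
          exact absurd (hM2 _ hiA (le_of_lt hlt)) (ne_of_lt hlt)
        rcases lt_or_eq_of_le hle with hlt | heq
        · rw [← hidx A hA]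
          exact hmono M (idx A) hlt
        · rw [← hidx A hA, heq]
          exact almostSub_refl _
    set bad : Set ℕ := ⋃ A ∈ t, (base \ A) with hbad
    have hbadfin : bad.Finite := by
      apply Set.Finite.biUnion htfin
      intro A hA
      rcases hts hA with hA1 | hA2
      · exact hbase A ⟨hA, hA1⟩
      · exact Set.Finite.subset hA2 (fun x hx => hx.2)
    obtain ⟨x, hx⟩ := (hbaseinf.diff hbadfin).nonempty
    refine ⟨x, ?_⟩
    rw [Set.mem_sInter]
    intro A hA
    by_contra hxA
    exact hx.2 (Set.mem_biUnion hA ⟨hx.1, hxA⟩)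
  have hnb : (Filter.generate S).NeBot := Filter.generate_neBot_iff.2 hfip
  set p := Ultrafilter.of (Filter.generate S) with hpdef
  have hp : ∀ A ∈ S, A ∈ p :=
    fun A hA => Filter.le_def.1 (Ultrafilter.of_le (Filter.generate S)) A
      (Filter.mem_generate_of_mem hA)
  exact ⟨p, mem_NStar_iff.2 (fun A hA => hp A (Or.inr hA)), fun i => hp _ (Or.inl ⟨i, rfl⟩)⟩

lemma inR_addU (hmono : ∀ i j, j < i → almostSub (T i) (T j))
    (hshift : ∀ i j, j < i → almostSub (T i) (res (T j) 1))
    {p : βN} (hp : inR T p) (x : βN) : inR T (addU p x) := by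
  refine ⟨addU_mem_NStar hp.1 x, fun i => ?_⟩
  rw [mem_addU]
  have hall : ∀ n, res (T i) n ∈ p := by
    intro n
    obtain ⟨j, hj⟩ := res_cofinal hmono hshift n i
    exact NStar.mem_of_almost hp.1 (hp.2 j) hj
  exact Filter.mem_of_superset Filter.univ_mem (fun n _ => hall n)

lemma star_lemma {E : (Cardinal.continuum.{0}.ord).ToType → Set ℕ}
    (hE : Function.Surjective E)
    (hmin : ∀ i, T i ∩ E i = ∅ ∨ ∃ k, T i ⊆ UU (E i) k)
    {p q : βN} (hp : inR T p) (hq : inR T q) : ∃ x : βN, addU p x = q := by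
  classical
  set S : Set ℕ → Set ℕ := fun A => {n | res A n ∈ p} with hSdef
  have hSne : ∀ A ∈ q, (S A).Nonempty := by
    intro A hA
    obtain ⟨i, rfl⟩ := hE A
    rcases hmin i with hcase | ⟨k, hcase⟩
    · exfalso
      have hint : T i ∩ E i ∈ q := Filter.inter_mem (hq.2 i) hA
      rw [hcase] at hint
      exact (Ultrafilter.nonempty_of_mem hint).ne_empty rfl
    · have hUU : UU (E i) k ∈ p := Filter.mem_of_superset (hp.2 i) hcase
      rw [UU] at hUU
      obtain ⟨n, _, hmem⟩ := (Ultrafilter.finite_biUnion_mem_iff (Set.finite_Iic k)).1 hUU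
      exact ⟨n, hmem⟩
  have hfip : ∀ t ⊆ S '' {A | A ∈ q}, t.Finite → (⋂₀ t).Nonempty := by
    intro t hts htfin
    have hex : ∀ B ∈ t, ∃ A, A ∈ q ∧ S A = B := by
      intro B hB
      obtain ⟨A, hA1, hA2⟩ := hts hB
      exact ⟨A, hA1, hA2⟩
    choose! A hA1 hA2 using hex
    set A0 : Set ℕ := ⋂ B ∈ t, A B with hA0
    have hA0q : A0 ∈ q := (Filter.biInter_mem htfin).2 (fun B hB => hA1 B hB)
    obtain ⟨n, hn⟩ := hSne A0 hA0q
    refine ⟨n, ?_⟩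
    rw [Set.mem_sInter]
    intro B hB
    rw [← hA2 B hB]
    show res (A B) n ∈ p
    refine Filter.mem_of_superset hn (res_mono ?_ n)
    exact Set.biInter_subset_of_mem hB
  have hnb : (Filter.generate (S '' {A | A ∈ q})).NeBot := Filter.generate_neBot_iff.2 hfip
  set x := Ultrafilter.of (Filter.generate (S '' {A | A ∈ q})) with hxdef
  refine ⟨x, Ultrafilter.eq_of_le ?_⟩
  rw [Filter.le_def]
  intro A hA
  have hSA : S A ∈ x :=
    Filter.le_def.1 (Ultrafilter.of_le _) _ (Filter.mem_generate_of_mem ⟨A, hA, rfl⟩)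
  exact mem_addU.2 hSA

lemma exists_idem (hth : ∀ i, Thick (T i))
    (hmono : ∀ i j, j < i → almostSub (T i) (T j))
    (hshift : ∀ i j, j < i → almostSub (T i) (res (T j) 1)) :
    ∃ p : βN, inR T p ∧ addU p p = p := by
  set Rset : Set βN := {p | inR T p} with hRset
  have hclosed : IsClosed Rset := by
    have hdecomp : Rset = (⋂ A ∈ {A : Set ℕ | Aᶜ.Finite}, {p : βN | A ∈ p}) ∩
        ⋂ i, {p : βN | T i ∈ p} := by
      ext p
      constructor
      · rintro ⟨h1, h2⟩
        exact ⟨Set.mem_iInter₂.2 (fun A hA => mem_NStar_iff.1 h1 A hA), Set.mem_iInter.2 h2⟩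
      · rintro ⟨h1, h2⟩
        exact ⟨mem_NStar_iff.2 (fun A hA => Set.mem_iInter₂.1 h1 A hA),
          fun i => Set.mem_iInter.1 h2 i⟩
    rw [hdecomp]
    exact IsClosed.inter
      (isClosed_biInter (fun A _ => ultrafilter_isClosed_basic A))
      (isClosed_iInter (fun i => ultrafilter_isClosed_basic (T i)))
  have hne : Rset.Nonempty := exists_inR hth hmono
  have hadd : ∀ x ∈ Rset, ∀ y ∈ Rset, x + y ∈ Rset := by
    intro x hx y hy
    have heq : x + y = addU y x := (addU_eq_add y x).symm
    rw [heq]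
    exact inR_addU hmono hshift hy x
  obtain ⟨m, hm, hidem⟩ := exists_idempotent_in_compact_add_subsemigroup
    (fun r => Ultrafilter.continuous_add_left r) Rset hne hclosed.isCompact hadd
  refine ⟨m, hm, ?_⟩
  rw [addU_eq_add]
  exact hidem

end Main
/-! ### Main theorem -/

theorem main (h : towerNum = Cardinal.continuum.{0}) :
    ∃ p : βN, p ∈ NStar ∧ addU p p = p ∧
      ∀ q : βN, q ∈ NStar → addU q q = q → q ≠ p →
        ¬(addU p q = p ∧ addU q p = p) ∧ ¬(addU q p = q ∧ addU p q = q) := by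
  classical
  obtain ⟨T, E, hE, hGood⟩ := construction h
  have hth : ∀ i, Thick (T i) := fun i => (hGood i).1
  have hmono : ∀ i j, j < i → almostSub (T i) (T j) := fun i j hj => ((hGood i).2.1 j hj).1
  have hshift : ∀ i j, j < i → almostSub (T i) (res (T j) 1) :=
    fun i j hj => ((hGood i).2.1 j hj).2
  have hmin : ∀ i, T i ∩ E i = ∅ ∨ ∃ k, T i ⊆ UU (E i) k := fun i => (hGood i).2.2
  obtain ⟨p, hpR, hpp⟩ := exists_idem hth hmono hshift
  refine ⟨p, hpR.1, hpp, ?_⟩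
  intro q hqN hqq hqne
  constructor
  · -- `¬(p ≤ q)`
    rintro ⟨hpq, hqp⟩
    by_cases hcase : ∃ n : ℕ, inR T (addU q (pure n))
    · -- some shift of `q` lies in `R`; then `q ∈ R` and the algebra forces `q = p`
      obtain ⟨n, hn⟩ := hcase
      have hqmem : ∀ m, n ≤ m → inR T (addU q (pure m)) := by
        intro m hm
        have heq : addU q (pure m) = addU (addU q (pure n)) (pure (m - n)) := by
          rw [addU_assoc, pure_add_pure, Nat.add_sub_cancel' hm]
        rw [heq]
        exact inR_addU hmono hshift hn _
      have hqR : inR T q := by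
        refine ⟨hqN, fun i => ?_⟩
        have hTi : T i ∈ addU q q := by
          rw [mem_addU]
          have hcof : {m : ℕ | n ≤ m} ∈ q := by
            apply mem_NStar_iff.1 hqN
            have : {m : ℕ | n ≤ m}ᶜ = Set.Iio n := by ext m; simp
            rw [this]
            exact Set.finite_Iio n
          refine Filter.mem_of_superset hcof ?_
          intro m hm
          show res (T i) m ∈ q
          have := (hqmem m hm).2 i
          rwa [mem_addU_pure] at this
        rwa [hqq] at hTi
      obtain ⟨x, hx⟩ := star_lemma hE hmin hpR hqR
      have hfix : addU p q = q := by
        rw [← hx, ← addU_assoc, hpp]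
      exact hqne (by rw [← hfix, hpq])
    · -- no shift of `q` lies in `R`; use the `P`-filter property of the tower
      push_neg at hcase
      have hch : ∀ n : ℕ, ∃ i, T i ∉ addU q (pure n) := by
        intro n
        have hNn : addU q (pure n) ∈ NStar := addU_mem_NStar hqN _
        by_contra hc
        push_neg at hc
        exact hcase n ⟨hNn, hc⟩
      choose iF hiF using hch
      obtain ⟨b, hb⟩ := exists_bound_of_countable (Set.range iF) (Set.countable_range iF)
      have h1 : T b ∈ addU q p := by rw [hqp]; exact hpR.2 b
      rw [mem_addU] at h1
      obtain ⟨n, hn⟩ := Ultrafilter.nonempty_of_mem h1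
      have h2 : almostSub (T b) (T (iF n)) := hmono b (iF n) (hb _ (Set.mem_range_self n))
      have h3 : res (T (iF n)) n ∈ q :=
        NStar.mem_of_almost hqN hn (almostSub_res h2 n)
      exact hiF n (mem_addU_pure.2 h3)
  · -- `¬(q ≤ p)`
    rintro ⟨hqp, hpq⟩
    have hqR : inR T q := by
      rw [← hpq]
      exact inR_addU hmono hshift hpR q
    obtain ⟨x, hx⟩ := star_lemma hE hmin hqR hpR
    have hfix : addU q p = p := by
      rw [← hx, ← addU_assoc, hqq]
    exact hqne (by rw [← hqp, hfix])
end Stmt11Aux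
/-- If `𝔱 = 𝔠` then there is an idempotent `p ∈ ℕ*` that is
`≤`-incomparable with every other idempotent of `ℕ*`, where `r ≤ s` means
`r + s = s + r = r`. -/
theorem stmt11 (h : towerNum = Cardinal.continuum) :
    ∃ p : βN, p ∈ NStar ∧ addU p p = p ∧
      ∀ q : βN, q ∈ NStar → addU q q = q → q ≠ p →
        ¬(addU p q = p ∧ addU q p = p) ∧ ¬(addU q p = q ∧ addU p q = q) := by
  exact Stmt11Aux.main h

end
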